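/- Let Z' be a Hermitian D×D complex matrix with Z'² = 1, and suppose there exists a unitary D×D complex matrix X' with X'·Z' = −(Z'·X'). Then the eigenspace of Z' (viewed as an endomorphism of ℂ^D via Matrix.toLin') for eigenvalue 1 and the eigenspace for eigenvalue −1 have equal finite dimension, and consequently D is even, D = 2·(dim of the +1 eigenspace). -/
import Mathlib


open Matrix Module

/-- if `Z'` is Hermitian, squares to the identity, and anticommutes with some
unitary `X'`, then its `+1` and `-1` eigenspaces have the same finite dimension, and
`D` is twice that dimension. -/
theorem eigenspaces_of_anticommuting_involution (D : ℕ) (Z' : Matrix (Fin D) (Fin D) ℂ)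
    (hZherm : Z'.IsHermitian) (hZ2 : Z' * Z' = 1)
    (hX : ∃ X' : Matrix (Fin D) (Fin D) ℂ,
      X' ∈ Matrix.unitaryGroup (Fin D) ℂ ∧ X' * Z' = -(Z' * X')) :
    Module.finrank ℂ (Module.End.eigenspace (Matrix.toLin' Z') 1) =
      Module.finrank ℂ (Module.End.eigenspace (Matrix.toLin' Z') (-1)) ∧
    D = 2 * Module.finrank ℂ (Module.End.eigenspace (Matrix.toLin' Z') 1) := by
  obtain ⟨X', hXu, hXZ⟩ := hX
  set f := Matrix.toLin' Z' with hf
  set g := Matrix.toLin' X' with hg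
  set E1 := Module.End.eigenspace f 1 with hE1
  set E2 := Module.End.eigenspace f (-1) with hE2
  have hmem1 : ∀ v : Fin D → ℂ, v ∈ E1 ↔ f v = v := by
    intro v
    rw [hE1, Module.End.mem_eigenspace_iff, one_smul]
  have hmem2 : ∀ v : Fin D → ℂ, v ∈ E2 ↔ f v = -v := by
    intro v
    rw [hE2, Module.End.mem_eigenspace_iff, neg_smul, one_smul]
  -- f is an involution
  have hf2 : ∀ v, f (f v) = v := by
    intro v
    have h1 : Matrix.toLin' (Z' * Z') = Matrix.toLin' (1 : Matrix (Fin D) (Fin D) ℂ) := by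
      rw [hZ2]
    rw [Matrix.toLin'_mul, Matrix.toLin'_one] at h1
    simpa [hf] using LinearMap.congr_fun h1 v
  -- anticommutation at the level of linear maps
  have hanti : ∀ v, g (f v) = -(f (g v)) := by
    intro v
    have h1 : Matrix.toLin' (X' * Z') = Matrix.toLin' (-(Z' * X')) := by rw [hXZ]
    rw [Matrix.toLin'_mul, map_neg, Matrix.toLin'_mul] at h1
    simpa [hf, hg] using LinearMap.congr_fun h1 v
  -- g is injective
  have hginv : ∀ a, Matrix.toLin' (star X') (g a) = a := by
    intro a
    have h1 : star X' * X' = 1 := hXu.1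
    have h2 : Matrix.toLin' (star X') ∘ₗ g = LinearMap.id := by
      rw [hg, ← Matrix.toLin'_mul, h1, Matrix.toLin'_one]
    simpa using LinearMap.congr_fun h2 a
  have hginj : Function.Injective g := by
    intro a b hab
    have := congrArg (Matrix.toLin' (star X')) hab
    rw [hginv a, hginv b] at this
    exact this
  -- g swaps eigenspaces
  have hswap1 : ∀ v ∈ E1, g v ∈ E2 := by
    intro v hv
    rw [hmem1] at hv
    rw [hmem2]
    have h := hanti v
    rw [hv] at h
    simpa using congrArg Neg.neg h.symm
  have hswap2 : ∀ v ∈ E2, g v ∈ E1 := by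
    intro v hv
    rw [hmem2] at hv
    rw [hmem1]
    have h := hanti v
    rw [hv, map_neg] at h
    have := neg_injective h
    exact this.symm
  -- linear maps between eigenspaces
  let φ : E1 →ₗ[ℂ] E2 := (g.restrict hswap1)
  let ψ : E2 →ₗ[ℂ] E1 := (g.restrict hswap2)
  have hφinj : Function.Injective φ := by
    intro a b hab
    have : g a.1 = g b.1 := congrArg Subtype.val hab
    exact Subtype.ext (hginj this)
  have hψinj : Function.Injective ψ := by
    intro a b hab
    have : g a.1 = g b.1 := congrArg Subtype.val hab
    exact Subtype.ext (hginj this)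
  have heq : Module.finrank ℂ E1 = Module.finrank ℂ E2 :=
    le_antisymm (LinearMap.finrank_le_finrank_of_injective hφinj)
      (LinearMap.finrank_le_finrank_of_injective hψinj)
  refine ⟨heq, ?_⟩
  -- E1 ⊔ E2 = ⊤ and E1 ⊓ E2 = ⊥
  have hsup : E1 ⊔ E2 = ⊤ := by
    rw [eq_top_iff]
    intro v _
    have h1 : (2:ℂ)⁻¹ • (v + f v) ∈ E1 := by
      rw [hmem1]
      simp only [_root_.map_smul, map_add, hf2]
      rw [add_comm]
    have h2 : (2:ℂ)⁻¹ • (v - f v) ∈ E2 := by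
      rw [hmem2]
      simp only [_root_.map_smul, map_sub, hf2]
      rw [← smul_neg, neg_sub]
    have : v = (2:ℂ)⁻¹ • (v + f v) + (2:ℂ)⁻¹ • (v - f v) := by
      rw [← smul_add]
      have : v + f v + (v - f v) = (2:ℂ) • v := by
        rw [two_smul]; abel
      rw [this, smul_smul, inv_mul_cancel₀ (two_ne_zero), one_smul]
    rw [this]
    exact Submodule.add_mem _ (Submodule.mem_sup_left h1) (Submodule.mem_sup_right h2)
  have hinf : E1 ⊓ E2 = ⊥ := by
    rw [eq_bot_iff]
    intro v hv
    have h1 := (hmem1 v).mp hv.1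
    have h2 := (hmem2 v).mp hv.2
    have : v = -v := h1.symm.trans h2
    have hv0 : v = 0 := by
      have := eq_neg_iff_add_eq_zero.mp this
      have h2v : (2:ℂ) • v = 0 := by rw [two_smul]; exact this
      simpa using smul_eq_zero.mp h2v |>.resolve_left two_ne_zero
    simp [hv0]
  have hD : Module.finrank ℂ (Fin D → ℂ) = D := Module.finrank_fin_fun ℂ
  have := Submodule.finrank_sup_add_finrank_inf_eq E1 E2
  rw [hsup, hinf] at this
  simp only [finrank_top, finrank_bot, add_zero] at this
  rw [hD] at this
  omega
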